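/- Let A ∈ ℝ^{d×d} be symmetric and Σ ∈ ℝ^{d×d} symmetric with ΣAΣ = 0 (equivalently, Σ is a stationary point of Σ̇ = ΣAΣ + ΣAΣ with V = I_d). Then rank(Σ) ≤ dim ker(A) + min(p, q), where p and q are the numbers of positive and negative eigenvalues of A respectively. -/

import Mathlib

open Matrix

/-- Key lemma: if `T` is symmetric with `T * diagonal μ * T = 0`, then
`rank T ≤ #{i | ¬ μ i < 0}`. -/
lemma aux_rank_le (d : ℕ) (T : Matrix (Fin d) (Fin d) ℝ) (μ : Fin d → ℝ)
    (hT : Tᵀ = T) (h : T * diagonal μ * T = 0) [DecidablePred fun i => ¬ μ i < 0] :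
    T.rank ≤ Fintype.card {i : Fin d // ¬ μ i < 0} := by
  classical
  -- quadratic form vanishes on range of T
  have key : ∀ u : Fin d → ℝ, ∑ i, μ i * (T *ᵥ u) i ^ 2 = 0 := by
    intro u
    have h1 : (T *ᵥ u) ⬝ᵥ (diagonal μ *ᵥ (T *ᵥ u)) = 0 := by
      have e1 : ∀ (M : Matrix (Fin d) (Fin d) ℝ) (v w : Fin d → ℝ),
          (M *ᵥ v) ⬝ᵥ w = v ⬝ᵥ (Mᵀ *ᵥ w) := by
        intro M v w
        rw [← vecMul_transpose, ← dotProduct_mulVec]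
      have : (T *ᵥ u) ⬝ᵥ (diagonal μ *ᵥ (T *ᵥ u))
          = u ⬝ᵥ ((T * diagonal μ * T) *ᵥ u) := by
        rw [e1, mulVec_mulVec, mulVec_mulVec, hT]
      rw [this, h]
      simp
    rw [← h1]
    simp only [dotProduct, mulVec_diagonal]
    apply Finset.sum_congr rfl
    intro i _
    ring
  -- the coordinate-restriction map is injective on the range of T
  set W := LinearMap.range T.mulVecLin with hW
  let Φ : (Fin d → ℝ) →ₗ[ℝ] ({i : Fin d // ¬ μ i < 0} → ℝ) :=
    LinearMap.funLeft ℝ ℝ Subtype.val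
  have hinj : Function.Injective (Φ.comp W.subtype) := by
    rw [← LinearMap.ker_eq_bot]
    rw [LinearMap.ker_eq_bot']
    rintro ⟨x, hx⟩ hΦ
    obtain ⟨u, hu⟩ := hx
    have hxc : ∀ i : Fin d, ¬ μ i < 0 → x i = 0 := by
      intro i hi
      exact congrFun hΦ ⟨i, hi⟩
    have hsum : ∑ i, μ i * x i ^ 2 = 0 := by
      rw [← hu] at *
      exact key u
    have hterm : ∀ i ∈ Finset.univ, μ i * x i ^ 2 = 0 := by
      rw [← Finset.sum_eq_zero_iff_of_nonpos]
      · exact hsum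
      · intro i _
        by_cases hi : μ i < 0
        · exact mul_nonpos_of_nonpos_of_nonneg hi.le (sq_nonneg _)
        · rw [hxc i hi]; ring_nf; simp
    have hx0 : x = 0 := by
      funext i
      by_cases hi : μ i < 0
      · have := hterm i (Finset.mem_univ i)
        have hμ : μ i ≠ 0 := ne_of_lt hi
        have : x i ^ 2 = 0 := by
          rcases mul_eq_zero.mp this with h' | h'
          · exact absurd h' hμ
          · exact h'
        exact pow_eq_zero_iff (two_ne_zero) |>.mp this
      · exact hxc i hi
    exact Subtype.ext hx0
  have := LinearMap.finrank_le_finrank_of_injective hinj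
  calc T.rank = Module.finrank ℝ W := rfl
    _ ≤ Module.finrank ℝ ({i : Fin d // ¬ μ i < 0} → ℝ) := this
    _ = Fintype.card {i : Fin d // ¬ μ i < 0} := by
        rw [Module.finrank_pi]

theorem stmt_9 (d : ℕ) (A S : Matrix (Fin d) (Fin d) ℝ)
    (hA : A.IsHermitian) (hS : S.IsHermitian) (h : S * A * S = 0) :
    S.rank ≤ Module.finrank ℝ (LinearMap.ker A.mulVecLin) +
      min (Nat.card {i : Fin d // 0 < hA.eigenvalues i})
        (Nat.card {i : Fin d // hA.eigenvalues i < 0}) := by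
  classical
  set U : Matrix (Fin d) (Fin d) ℝ := (hA.eigenvectorUnitary : Matrix (Fin d) (Fin d) ℝ)
    with hUdef
  set lam : Fin d → ℝ := hA.eigenvalues with hlam
  have hU1 : star U * U = 1 := Unitary.coe_star_mul_self hA.eigenvectorUnitary
  have hU2 : U * star U = 1 := Unitary.coe_mul_star_self hA.eigenvectorUnitary
  have hdiag : star U * A * U = diagonal lam := by
    have := hA.conjStarAlgAut_star_eigenvectorUnitary
    simpa using this
  set T : Matrix (Fin d) (Fin d) ℝ := star U * S * U with hTdef
  have hkey : ∀ X Y : Matrix (Fin d) (Fin d) ℝ,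
      (star U * X * U) * (star U * Y * U) = star U * (X * Y) * U := by
    intro X Y
    calc (star U * X * U) * (star U * Y * U)
        = star U * X * (U * star U) * Y * U := by simp only [Matrix.mul_assoc]
      _ = star U * (X * Y) * U := by rw [hU2, Matrix.mul_one]; simp only [Matrix.mul_assoc]
  have hTDT : T * diagonal lam * T = 0 := by
    rw [hTdef, ← hdiag, hkey, hkey, h]
    simp
  have hThermitian : T.IsHermitian := by
    have := Matrix.isHermitian_conjTranspose_mul_mul U hS
    simpa [hTdef, Matrix.star_eq_conjTranspose, Matrix.mul_assoc] using this
  have hTsymm : Tᵀ = T := by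
    rw [← Matrix.conjTranspose_eq_transpose_of_trivial]
    exact hThermitian
  have hdetU : IsUnit U.det := by
    have : U.det * (star U).det = 1 := by
      rw [← Matrix.det_mul, hU2, Matrix.det_one]
    exact IsUnit.of_mul_eq_one _ this
  have hdetsU : IsUnit (star U).det := by
    have : (star U).det * U.det = 1 := by
      rw [← Matrix.det_mul, hU1, Matrix.det_one]
    exact IsUnit.of_mul_eq_one _ this
  have hrankT : T.rank = S.rank := by
    rw [hTdef, Matrix.rank_mul_eq_left_of_isUnit_det _ _ hdetU,
      Matrix.rank_mul_eq_right_of_isUnit_det _ _ hdetsU]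
  -- two bounds from aux
  have hb1 : S.rank ≤ Fintype.card {i : Fin d // ¬ lam i < 0} := by
    rw [← hrankT]
    exact aux_rank_le d T lam hTsymm hTDT
  have hb2 : S.rank ≤ Fintype.card {i : Fin d // ¬ (fun j => -lam j) i < 0} := by
    rw [← hrankT]
    apply aux_rank_le d T (fun j => -lam j) hTsymm
    have : diagonal (fun j => -lam j) = -diagonal lam := (Matrix.diagonal_neg lam).symm
    rw [this, Matrix.mul_neg, Matrix.neg_mul, hTDT, neg_zero]
  -- counting
  have hcard1 : Fintype.card {i : Fin d // ¬ lam i < 0}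
      = Fintype.card {i : Fin d // lam i = 0} + Fintype.card {i : Fin d // 0 < lam i} := by
    rw [← Fintype.card_subtype_or_disjoint _ _ (by
      rintro p hp1 hp2 i hi
      have h1 := hp1 i hi
      have h2 := hp2 i hi
      simp only at h1 h2
      exact absurd h1 (ne_of_gt h2))]
    apply Fintype.card_congr
    apply Equiv.subtypeEquivRight
    intro i
    constructor
    · intro hi
      rcases (not_lt.mp hi).eq_or_lt with h' | h'
      · exact Or.inl h'.symm
      · exact Or.inr h'
    · rintro (h' | h') <;> simp [h', le_of_lt, not_lt]
  have hcard2 : Fintype.card {i : Fin d // ¬ (fun j => -lam j) i < 0}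
      = Fintype.card {i : Fin d // lam i = 0} + Fintype.card {i : Fin d // lam i < 0} := by
    rw [← Fintype.card_subtype_or_disjoint _ _ (by
      rintro p hp1 hp2 i hi
      have h1 := hp1 i hi
      have h2 := hp2 i hi
      simp only at h1 h2
      exact absurd h1 (ne_of_lt h2))]
    apply Fintype.card_congr
    apply Equiv.subtypeEquivRight
    intro i
    simp only [neg_lt_zero, not_lt]
    constructor
    · intro hi
      rcases hi.eq_or_lt with h' | h'
      · exact Or.inl h'
      · exact Or.inr h'
    · rintro (h' | h') <;> linarith
  -- kernel dimension
  have hker : Module.finrank ℝ (LinearMap.ker A.mulVecLin)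
      = Fintype.card {i : Fin d // lam i = 0} := by
    have hrn := LinearMap.finrank_range_add_finrank_ker A.mulVecLin
    have hrk : A.rank = Fintype.card {i : Fin d // lam i ≠ 0} := hA.rank_eq_card_non_zero_eigs
    have hdom : Module.finrank ℝ (Fin d → ℝ) = d := by
      rw [Module.finrank_pi, Fintype.card_fin]
    have hcompl : Fintype.card {i : Fin d // lam i ≠ 0}
        = d - Fintype.card {i : Fin d // lam i = 0} := by
      rw [Fintype.card_subtype_compl, Fintype.card_fin]
    have hle : Fintype.card {i : Fin d // lam i = 0} ≤ d :=
      (Fintype.card_subtype_le _).trans (le_of_eq (Fintype.card_fin d))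
    have hrA : A.rank = Module.finrank ℝ (LinearMap.range A.mulVecLin) := rfl
    rw [hdom] at hrn
    omega
  rw [hker]
  rw [Nat.card_eq_fintype_card, Nat.card_eq_fintype_card]
  rw [hcard1] at hb1
  rw [hcard2] at hb2
  omega
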